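/- Let φ be a state on ℂ⟨X⟩ (equivalently a moment sequence) defined from another state ψ by φ(R) = ψ((1 − sX)^{−1} R) / M^ψ(s), where (1 − sX)^{−1} is a formal power series in s and M^ψ(s) = ψ((1−sX)^{−1}). Then the moment generating functions satisfy, as formal power series in z (with coefficients rational in s): M^φ(z) = (s M^ψ(s) − z M^ψ(z)) / ((s − z) M^ψ(s)), and consequently the shifted Boolean transforms satisfy η̃^φ(z) = (M^ψ(s) − M^ψ(z)) / (s M^ψ(s) − z M^ψ(z)). -/

import Mathlib

/-- let `ψ` be the state on `ℂ⟨X⟩` with moment sequence `m`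
(`m 0 = 1`), and let `φ` be the state `φ(R) = ψ((1−sX)^{-1}R)/M^ψ(s)`, so that
its moments are `φ(Xᵏ) = (∑_j s^j m_{j+k})/M^ψ(s)`.  Then the moment generating
functions satisfy `M^φ(z) = (s M^ψ(s) − z M^ψ(z)) / ((s − z) M^ψ(s))`, and the
shifted Boolean transform `η̃^φ(z) = (M^φ(z) − 1)/(z M^φ(z))` satisfies
`η̃^φ(z) = (M^ψ(s) − M^ψ(z)) / (s M^ψ(s) − z M^ψ(z))`. -/
theorem moment_transform_of_tilted_state
    (m : ℕ → ℂ) (hm0 : m 0 = 1) (s z : ℂ) (hsz : s ≠ z) (hz0 : z ≠ 0)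
    (hs : Summable fun n : ℕ => m n * s ^ n)
    (hzs : Summable fun n : ℕ => m n * z ^ n)
    (hφk : ∀ k : ℕ, Summable fun j : ℕ => s ^ j * m (j + k))
    (hdouble : Summable fun p : ℕ × ℕ => s ^ p.1 * z ^ p.2 * m (p.1 + p.2))
    (Mψs Mψz Mφz : ℂ)
    (hMψs : Mψs = ∑' n : ℕ, m n * s ^ n) (hMs0 : Mψs ≠ 0)
    (hMψz : Mψz = ∑' n : ℕ, m n * z ^ n)
    (hMφz : Mφz = ∑' n : ℕ, ((∑' j : ℕ, s ^ j * m (j + n)) / Mψs) * z ^ n) :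
    Mφz = (s * Mψs - z * Mψz) / ((s - z) * Mψs) ∧
    (Mφz - 1) / (z * Mφz) = (Mψs - Mψz) / (s * Mψs - z * Mψz) := by
  have hsz' : s - z ≠ 0 := sub_ne_zero.mpr hsz
  set f : ℕ × ℕ → ℂ := fun p => s ^ p.1 * z ^ p.2 * m (p.1 + p.2) with hf
  set T : ℂ := ∑' p : ℕ × ℕ, f p with hTdef
  -- f composed with swap is summable
  have hswap : Summable fun p : ℕ × ℕ => f (p.2, p.1) := by
    have := (Equiv.prodComm ℕ ℕ).summable_iff.mpr hdouble
    exact this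
  -- T as iterated sum, n outer
  have hTiter : T = ∑' n : ℕ, ∑' j : ℕ, f (j, n) := by
    rw [hTdef, ← (Equiv.prodComm ℕ ℕ).tsum_eq f]
    exact hswap.tsum_prod
  -- Mφz = T / Mψs
  have hMφT : Mφz = T / Mψs := by
    rw [hMφz, hTiter]
    rw [tsum_congr (fun n => div_mul_eq_mul_div _ _ _), tsum_div_const]
    congr 1
    refine tsum_congr fun n => ?_
    rw [← tsum_mul_right]
    exact tsum_congr fun j => by simp [hf]; ring
  -- antidiagonal form of T
  have hfib : ∀ n : ℕ, ∑ p ∈ Finset.HasAntidiagonal.antidiagonal n, f p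
      = m n * ∑ i ∈ Finset.range (n + 1), s ^ i * z ^ (n - i) := by
    intro n
    rw [Finset.Nat.sum_antidiagonal_eq_sum_range_succ_mk, Finset.mul_sum]
    refine Finset.sum_congr rfl fun i hi => ?_
    have : i + (n - i) = n := Nat.add_sub_cancel' (Nat.lt_succ_iff.mp (Finset.mem_range.mp hi))
    rw [hf]; dsimp only; rw [this]; ring
  have hsig : Summable fun x : Σ n : ℕ, Finset.HasAntidiagonal.antidiagonal n => f (x.2 : ℕ × ℕ) :=
    Finset.HasAntidiagonal.sigmaAntidiagonalEquivProd.summable_iff.mpr hdouble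
  have hTanti : T = ∑' n : ℕ, m n * ∑ i ∈ Finset.range (n + 1), s ^ i * z ^ (n - i) := by
    rw [hTdef, ← Finset.HasAntidiagonal.sigmaAntidiagonalEquivProd.tsum_eq f]
    have hstep : ∑' (c : Σ n : ℕ, Finset.HasAntidiagonal.antidiagonal n), f (Finset.HasAntidiagonal.sigmaAntidiagonalEquivProd c)
        = ∑' (n : ℕ), ∑' (p : Finset.HasAntidiagonal.antidiagonal n), f (p : ℕ × ℕ) := hsig.tsum_sigma
    rw [hstep]
    refine tsum_congr fun n => ?_
    rw [← hfib n]
    exact Finset.tsum_subtype _ f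
  -- key identity
  have hkey : (s - z) * T = s * Mψs - z * Mψz := by
    have hs' : Summable fun n : ℕ => m n * s ^ (n + 1) := by
      have := hs.mul_right s
      refine this.congr fun n => ?_
      rw [pow_succ]; ring
    have hz' : Summable fun n : ℕ => m n * z ^ (n + 1) := by
      have := hzs.mul_right z
      refine this.congr fun n => ?_
      rw [pow_succ]; ring
    rw [hTanti, ← tsum_mul_left]
    have : ∀ n : ℕ, (s - z) * (m n * ∑ i ∈ Finset.range (n + 1), s ^ i * z ^ (n - i))
        = m n * s ^ (n + 1) - m n * z ^ (n + 1) := by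
      intro n
      have hg := geom_sum₂_mul s z (n + 1)
      simp only [Nat.add_sub_cancel] at hg
      linear_combination m n * hg
    rw [tsum_congr this, hs'.tsum_sub hz']
    have e1 : ∑' n : ℕ, m n * s ^ (n + 1) = Mψs * s := by
      rw [hMψs, ← tsum_mul_right]
      exact tsum_congr fun n => by rw [pow_succ]; ring
    have e2 : ∑' n : ℕ, m n * z ^ (n + 1) = Mψz * z := by
      rw [hMψz, ← tsum_mul_right]
      exact tsum_congr fun n => by rw [pow_succ]; ring
    rw [e1, e2]; ring
  have h1 : Mφz = (s * Mψs - z * Mψz) / ((s - z) * Mψs) := by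
    rw [hMφT, ← hkey]
    field_simp
  refine ⟨h1, ?_⟩
  by_cases hD : s * Mψs - z * Mψz = 0
  · have hMφ0 : Mφz = 0 := by rw [h1, hD, zero_div]
    rw [hMφ0, hD, mul_zero, div_zero, div_zero]
  · rw [h1]
    field_simp
    ring
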